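/- If a coloring c : [κ]² → θ witnesses U₁(κ,2,θ,χ), then F_{c,χ} := {T ⊆ θ : ∃𝒜 ∈ 𝔸^κ_χ with T_c(𝒜) ⊆ T} is a χ-complete filter on θ. -/

import Mathlib

open Cardinal Set

/-- A set (of a `Type 1`, such as sets of ordinals or families of such sets)
has cardinality exactly the (small) cardinal `κ`. -/
def cardEq {X : Type 1} (s : Set X) (κ : Cardinal.{0}) : Prop :=
  #s = Cardinal.lift.{1} κ

/-- A set has cardinality at most `κ`. -/
def cardLE {X : Type 1} (s : Set X) (κ : Cardinal.{0}) : Prop :=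
  #s ≤ Cardinal.lift.{1} κ

/-- A set has cardinality less than `κ`. -/
def cardLT {X : Type 1} (s : Set X) (κ : Cardinal.{0}) : Prop :=
  #s < Cardinal.lift.{1} κ



/-- The set of ordinals `a` has order type (exactly) the ordinal `σ`. -/
def otpEq (a : Set Ordinal) (σ : Ordinal.{0}) : Prop :=
  Ordinal.type ((· < ·) : a → a → Prop) = Ordinal.lift.{1} σ

/-- `a < b` elementwise: every element of `a` is below every element of `b`. -/
def setBelow (a b : Set Ordinal) : Prop := ∀ x ∈ a, ∀ y ∈ b, x < y

/-- `c[a × b] = {τ}`: the coloring `c` is constantly `τ` on `a × b`. -/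
def constOn (c : Ordinal → Ordinal → Ordinal) (a b : Set Ordinal) (τ : Ordinal) : Prop :=
  Set.image2 c a b = {τ}

/-- `𝒜` is a `κ`-sized pairwise disjoint subfamily of `[κ]^σ`. -/
def KappaFam (κ : Cardinal.{0}) (σ : Ordinal) (𝒜 : Set (Set Ordinal)) : Prop :=
  (∀ a ∈ 𝒜, a ⊆ Set.Iio κ.ord ∧ otpEq a σ) ∧ 𝒜.PairwiseDisjoint id ∧ cardEq 𝒜 κ

/-- `c` witnesses `Pr₁(κ, κ, θ, χ)`. -/
def IsPr1 (κ θ χ : Cardinal.{0}) (c : Ordinal → Ordinal → Ordinal) : Prop :=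
  ∀ σ < χ.ord, ∀ 𝒜 : Set (Set Ordinal), KappaFam κ σ 𝒜 →
    ∀ ξ < θ.ord, ∃ a ∈ 𝒜, ∃ b ∈ 𝒜, setBelow a b ∧ constOn c a b ξ

/-- `Pr₁(κ, κ, θ, χ)`. -/
def Pr1 (κ θ χ : Cardinal.{0}) : Prop :=
  ∃ c : Ordinal → Ordinal → Ordinal,
    (∀ α β : Ordinal, α < β → β < κ.ord → c α β < θ.ord) ∧ IsPr1 κ θ χ c

/-- `c` witnesses `U₁(κ, 2, θ, χ)`. -/
def IsU1 (κ θ χ : Cardinal.{0}) (c : Ordinal → Ordinal → Ordinal) : Prop :=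
  ∀ σ < χ.ord, ∀ 𝒜 : Set (Set Ordinal), KappaFam κ σ 𝒜 →
    ∀ ε < θ.ord, ∃ a ∈ 𝒜, ∃ b ∈ 𝒜, setBelow a b ∧
      ∃ τ, ε < τ ∧ τ < θ.ord ∧ constOn c a b τ

/-- `U₁(κ, 2, θ, χ)`. -/
def U1 (κ θ χ : Cardinal.{0}) : Prop :=
  ∃ c : Ordinal → Ordinal → Ordinal,
    (∀ α β : Ordinal, α < β → β < κ.ord → c α β < θ.ord) ∧ IsU1 κ θ χ c

/-- `c` witnesses `U(κ, μ, θ, χ)`. -/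
def IsU (κ μ θ χ : Cardinal.{0}) (c : Ordinal → Ordinal → Ordinal) : Prop :=
  ∀ σ < χ.ord, ∀ 𝒜 : Set (Set Ordinal), KappaFam κ σ 𝒜 →
    ∀ τ < θ.ord, ∃ ℬ ⊆ 𝒜, cardEq ℬ μ ∧
      ∀ a ∈ ℬ, ∀ b ∈ ℬ, setBelow a b → ∀ z ∈ Set.image2 c a b, τ ≤ z

/-- `𝒜 ∈ 𝔸^κ_χ`: a pairwise disjoint family of `κ` many (nonempty) subsets of `κ`,
with the supremum of the cardinalities of its members below `χ`. -/
def AFam (κ χ : Cardinal.{0}) (𝒜 : Set (Set Ordinal)) : Prop :=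
  (∀ a ∈ 𝒜, a ⊆ Set.Iio κ.ord ∧ a.Nonempty) ∧ 𝒜.PairwiseDisjoint id ∧ cardEq 𝒜 κ ∧
    ∃ ν < χ, ∀ a ∈ 𝒜, cardLE a ν

/-- `T_c(𝒜)`: the set of `τ < θ` so that `c[a × b] = {τ}` for some `a < b` from `𝒜`. -/
def Tc (θ : Cardinal.{0}) (c : Ordinal → Ordinal → Ordinal) (𝒜 : Set (Set Ordinal)) :
    Set Ordinal :=
  {τ | τ < θ.ord ∧ ∃ a ∈ 𝒜, ∃ b ∈ 𝒜, setBelow a b ∧ constOn c a b τ}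

/-- The collection `F_{c,χ}` of subsets of `θ` containing some `T_c(𝒜)`, `𝒜 ∈ 𝔸^κ_χ`. -/
def Fc (κ θ χ : Cardinal.{0}) (c : Ordinal → Ordinal → Ordinal) : Set (Set Ordinal) :=
  {T | T ⊆ Set.Iio θ.ord ∧ ∃ 𝒜 : Set (Set Ordinal), AFam κ χ 𝒜 ∧ Tc θ c 𝒜 ⊆ T}

/-- `F` is a (proper) `χ`-complete filter on `θ`. -/
def IsNiceFilter (θ χ : Cardinal.{0}) (F : Set (Set Ordinal)) : Prop :=
  (∀ T ∈ F, T ⊆ Set.Iio θ.ord) ∧ Set.Iio θ.ord ∈ F ∧ ∅ ∉ F ∧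
    (∀ S ∈ F, ∀ T, S ⊆ T → T ⊆ Set.Iio θ.ord → T ∈ F) ∧
    (∀ I : Set (Set Ordinal), I ⊆ F → I.Nonempty → cardLT I χ → ⋂₀ I ∈ F)

/-- `F` is a `χ`-complete uniform filter on `θ`. -/
def IsUniformFilter (θ χ : Cardinal.{0}) (F : Set (Set Ordinal)) : Prop :=
  IsNiceFilter θ χ F ∧ ∀ T ∈ F, cardEq T θ

/-- `X` is `F`-positive. -/
def FPos (F : Set (Set Ordinal)) (X : Set Ordinal) : Prop :=
  ∀ T ∈ F, (X ∩ T).Nonempty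
/-- If `c` witnesses `U₁(κ,2,θ,χ)`, then `F_{c,χ}` is a `χ`-complete (proper) filter on `θ`. -/
lemma small_bdd {c : Cardinal.{0}} (hc : c.IsRegular) {s : Set Ordinal.{0}}
    (hsub : ∀ x ∈ s, x < c.ord) (hs : #s < Cardinal.lift.{1} c) :
    ∃ δ, δ < c.ord ∧ ∀ x ∈ s, x < δ := by
  set e := Ordinal.ToType.mk (o := c.ord) with he
  set s' : Set c.ord.ToType := {t | (e.symm t : Ordinal) ∈ s} with hs'
  have h1 : Cardinal.lift.{1} #s' ≤ Cardinal.lift.{0} #s := by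
    rw [Cardinal.lift_mk_le']
    exact ⟨⟨fun t => ⟨(e.symm t.1 : Iio c.ord).1, t.2⟩, by
      intro a b hab
      simp only [Subtype.mk.injEq] at hab
      exact Subtype.ext (e.symm.injective (Subtype.ext hab))⟩⟩
  rw [Cardinal.lift_id'] at h1
  have h2 : #s' < c := by
    have := h1.trans_lt hs
    exact Cardinal.lift_lt.1 this
  have hlt : #s' < Order.cof c.ord.ToType := by rw [Ordinal.cof_toType, hc.cof_eq]; exact h2
  obtain ⟨t, ht⟩ := not_isCofinal_iff.1 (fun hcof => (Order.cof_le hcof).not_gt hlt)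
  refine ⟨(e.symm t : Iio c.ord).1, (e.symm t).2, fun x hx => ?_⟩
  have hxc : x < c.ord := hsub x hx
  have hmem : e ⟨x, hxc⟩ ∈ s' := by
    simp only [hs', mem_setOf_eq, OrderIso.symm_apply_apply]
    exact hx
  have h5 : e.symm (e ⟨x, hxc⟩) < e.symm t := e.symm.lt_iff_lt.2 (ht _ hmem)
  rw [OrderIso.symm_apply_apply] at h5
  exact h5

lemma exists_high {κ χ : Cardinal.{0}} (hκ : κ.IsRegular) {𝒜 : Set (Set Ordinal)}
    (h𝒜 : AFam κ χ 𝒜) {γ : Ordinal} (hγ : γ < κ.ord) :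
    ∃ a ∈ 𝒜, ∀ x ∈ a, γ ≤ x := by
  by_contra hcon
  push_neg at hcon
  obtain ⟨h1, h2, h3, _⟩ := h𝒜
  have h3' : #↥𝒜 = Cardinal.lift.{1} κ := h3
  have hch : ∀ a : ↥𝒜, ∃ x, x ∈ a.1 ∧ x < γ := by
    intro a
    obtain ⟨x, hx1, hx2⟩ := hcon a.1 a.2
    exact ⟨x, hx1, hx2⟩
  choose g hg1 hg2 using hch
  have hinj : Function.Injective (fun a : ↥𝒜 => (⟨g a, hg2 a⟩ : ↥(Iio γ))) := by
    intro a b hab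
    simp only [Subtype.mk.injEq] at hab
    by_contra hne
    have hne' : a.1 ≠ b.1 := fun h => hne (Subtype.ext h)
    have hd := h2 a.2 b.2 hne'
    exact (Set.disjoint_left.1 hd (hg1 a)) (by have hab' : g a = g b := congrArg Subtype.val hab; exact hab' ▸ hg1 b)
  have hle : #↥𝒜 ≤ #↥(Iio γ) := Cardinal.mk_le_of_injective hinj
  rw [h3', Ordinal.mk_Iio_ordinal] at hle
  have : κ ≤ γ.card := Cardinal.lift_le.1 hle
  exact (Cardinal.lt_ord.1 hγ).not_ge this

open Classical in
noncomputable def pickF (𝒜 : Set (Set Ordinal.{0})) (γ : Ordinal.{0}) : Set Ordinal.{0} :=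
  if h : ∃ a ∈ 𝒜, ∀ x ∈ a, γ ≤ x then h.choose else ∅

lemma pickF_spec {𝒜 : Set (Set Ordinal.{0})} {γ : Ordinal.{0}}
    (h : ∃ a ∈ 𝒜, ∀ x ∈ a, γ ≤ x) :
    pickF 𝒜 γ ∈ 𝒜 ∧ ∀ x ∈ pickF 𝒜 γ, γ ≤ x := by
  rw [show pickF 𝒜 γ = h.choose from dif_pos h]
  exact ⟨h.choose_spec.1, h.choose_spec.2⟩

open Classical in
noncomputable def nxtBnd (κ : Cardinal.{0}) (s : Set Ordinal.{0}) : Ordinal.{0} :=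
  if h : ∃ δ, δ < κ.ord ∧ ∀ x ∈ s, x < δ then h.choose else 0

lemma nxtBnd_spec {κ : Cardinal.{0}} {s : Set Ordinal.{0}}
    (h : ∃ δ, δ < κ.ord ∧ ∀ x ∈ s, x < δ) :
    nxtBnd κ s < κ.ord ∧ ∀ x ∈ s, x < nxtBnd κ s := by
  rw [show nxtBnd κ s = h.choose from dif_pos h]
  exact ⟨h.choose_spec.1, h.choose_spec.2⟩

noncomputable def blkF (κ : Cardinal.{0}) (P : Ordinal.{0} → Set Ordinal.{0}) :
    Ordinal.{0} → Set Ordinal.{0} :=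
  Ordinal.lt_wf.fix fun α IH => P (nxtBnd κ (⋃ β : Iio α, IH β.1 β.2))

noncomputable def bndF (κ : Cardinal.{0}) (P : Ordinal.{0} → Set Ordinal.{0})
    (α : Ordinal.{0}) : Ordinal.{0} :=
  nxtBnd κ (⋃ β : Iio α, blkF κ P β.1)

lemma blkF_eq (κ : Cardinal.{0}) (P : Ordinal.{0} → Set Ordinal.{0}) (α : Ordinal.{0}) :
    blkF κ P α = P (bndF κ P α) := by
  rw [blkF, WellFounded.fix_eq]
  rfl

lemma blkF_props {κ χ : Cardinal.{0}} (hκ : κ.IsRegular) (hχκ : χ < κ)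
    {P : Ordinal → Set Ordinal}
    (hP : ∀ γ, γ < κ.ord → (∀ x ∈ P γ, γ ≤ x ∧ x < κ.ord) ∧ #(P γ) < Cardinal.lift.{1} χ) :
    ∀ α, α < κ.ord →
      bndF κ P α < κ.ord ∧ ∀ β, β < α → ∀ x ∈ blkF κ P β, x < bndF κ P α := by
  intro α
  induction α using Ordinal.induction with
  | h α IH =>
    intro hα
    have hUsub : ∀ x ∈ (⋃ β : Iio α, blkF κ P β.1), x < κ.ord := by
      intro x hx
      rw [Set.mem_iUnion] at hx
      obtain ⟨β, hxβ⟩ := hx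
      have hβ := IH β.1 β.2 (β.2.trans hα)
      rw [blkF_eq] at hxβ
      exact ((hP _ hβ.1).1 x hxβ).2
    have hUcard : #(⋃ β : Iio α, blkF κ P β.1) < Cardinal.lift.{1} κ := by
      calc #(⋃ β : Iio α, blkF κ P β.1)
          ≤ #↥(Iio α) * ⨆ β : ↥(Iio α), #(blkF κ P β.1) := Cardinal.mk_iUnion_le _
        _ ≤ Cardinal.lift.{1} α.card * Cardinal.lift.{1} χ := by
            apply mul_le_mul' (le_of_eq (Ordinal.mk_Iio_ordinal α))
            rcases isEmpty_or_nonempty ↥(Iio α) with hempty | hne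
            · rw [ciSup_of_empty]
              exact bot_le
            · apply ciSup_le'
              intro β
              rw [blkF_eq]
              exact le_of_lt (hP _ (IH β.1 β.2 (β.2.trans hα)).1).2
        _ = Cardinal.lift.{1} (α.card * χ) := (Cardinal.lift_mul _ _).symm
        _ < Cardinal.lift.{1} κ :=
            Cardinal.lift_lt.2 (Cardinal.mul_lt_of_lt hκ.aleph0_le (Cardinal.lt_ord.1 hα) hχκ)
    obtain ⟨δ, hδ1, hδ2⟩ := small_bdd hκ hUsub hUcard
    have hnb := nxtBnd_spec (κ := κ) ⟨δ, hδ1, hδ2⟩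
    refine ⟨hnb.1, fun β hβ x hx => hnb.2 x (Set.mem_iUnion.2 ⟨⟨β, hβ⟩, hx⟩)⟩

lemma tc_exists {κ θ χ : Cardinal.{0}} (hκ : κ.IsRegular) (hχκ : χ < κ)
    {c : Ordinal → Ordinal → Ordinal} (hc : IsU1 κ θ χ c)
    {𝒜 : Set (Set Ordinal)} (h𝒜 : AFam κ χ 𝒜) {ε : Ordinal} (hε : ε < θ.ord) :
    ∃ τ, ε < τ ∧ τ ∈ Tc θ c 𝒜 := by
  obtain ⟨h1, h2, h3, ν, hν, hν2⟩ := h𝒜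
  have h3' : #↥𝒜 = Cardinal.lift.{1} κ := h3
  have hsig : ∀ a : ↥𝒜, ∃ σ : ↥(Iio χ.ord),
      Ordinal.type ((· < ·) : a.1 → a.1 → Prop) = Ordinal.lift.{1} σ.1 := by
    intro a
    have hcard : (Ordinal.type ((· < ·) : a.1 → a.1 → Prop)).card < Cardinal.lift.{1} χ := by
      rw [Ordinal.card_type]
      exact lt_of_le_of_lt (hν2 a.1 a.2) (Cardinal.lift_lt.2 hν)
    have htlt : Ordinal.type ((· < ·) : a.1 → a.1 → Prop) < Ordinal.lift.{1} χ.ord := by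
      rw [Cardinal.lift_ord]
      exact Cardinal.lt_ord.2 hcard
    obtain ⟨σ, hσ⟩ := Ordinal.mem_range_lift_of_le (le_of_lt htlt)
    refine ⟨⟨σ, ?_⟩, hσ.symm⟩
    exact Ordinal.lift_lt.1 (hσ ▸ htlt)
  choose f hf using hsig
  obtain ⟨σ₀, hσ₀⟩ := Cardinal.infinite_pigeonhole_card f (Cardinal.lift.{1} κ)
      (le_of_eq h3'.symm) (Cardinal.aleph0_le_lift.2 hκ.aleph0_le)
      (by rw [Ordinal.mk_Iio_ordinal, Cardinal.card_ord, ← Cardinal.lift_ord,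
            ← Ordinal.lift_cof, hκ.cof_eq]
          exact Cardinal.lift_lt.2 hχκ)
  have hsub : Subtype.val '' (f ⁻¹' {σ₀}) ⊆ 𝒜 := by
    rintro a ⟨x, _, rfl⟩
    exact x.2
  have hcard' : #↥(Subtype.val '' (f ⁻¹' {σ₀})) = Cardinal.lift.{1} κ := by
    apply le_antisymm
    · rw [← h3']
      exact Cardinal.mk_le_mk_of_subset hsub
    · rw [Cardinal.mk_image_eq Subtype.val_injective]
      exact hσ₀
  have hK : KappaFam κ σ₀.1 (Subtype.val '' (f ⁻¹' {σ₀})) := by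
    refine ⟨?_, h2.subset hsub, hcard'⟩
    rintro a ⟨x, hx, rfl⟩
    refine ⟨(h1 x.1 x.2).1, ?_⟩
    have hfx : f x = σ₀ := hx
    show Ordinal.type ((· < ·) : x.1 → x.1 → Prop) = Ordinal.lift.{1} σ₀.1
    rw [hf x, hfx]
  obtain ⟨a, ha, b, hb, hab, τ, hτ1, hτ2, hconst⟩ := hc σ₀.1 σ₀.2 _ hK ε hε
  exact ⟨τ, hτ1, hτ2, a, hsub ha, b, hsub hb, hab, hconst⟩
theorem stmt4 (κ θ χ : Cardinal) (hκ : κ.IsRegular) (hχ : χ.IsRegular)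
    (hθ : θ.IsRegular) (hχκ : χ < κ) (hθκ : θ ≤ κ)
    (c : Ordinal → Ordinal → Ordinal)
    (hrange : ∀ α β : Ordinal, α < β → β < κ.ord → c α β < θ.ord)
    (hc : IsU1 κ θ χ c) :
    IsNiceFilter θ χ (Fc κ θ χ c) := by
  have hθpos : (0 : Ordinal) < θ.ord := by
    rw [Cardinal.lt_ord, Ordinal.card_zero]
    exact hθ.pos
  -- the singleton family
  have hsing : AFam κ χ ((fun α : Ordinal => ({α} : Set Ordinal)) '' Iio κ.ord) := by
    refine ⟨?_, ?_, ?_, 1, ?_, ?_⟩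
    · rintro a ⟨α, hα, rfl⟩
      exact ⟨singleton_subset_iff.2 hα, singleton_nonempty α⟩
    · rintro a ⟨α, _, rfl⟩ b ⟨β, _, rfl⟩ hne
      have hαβ : α ≠ β := fun h => hne (h ▸ rfl)
      exact Set.disjoint_singleton.2 hαβ
    · show #_ = Cardinal.lift.{1} κ
      rw [Cardinal.mk_image_eq (fun a b h => Set.singleton_eq_singleton_iff.1 h),
        Ordinal.mk_Iio_ordinal, Cardinal.card_ord]
    · exact lt_of_lt_of_le Cardinal.one_lt_aleph0 hχ.aleph0_le
    · rintro a ⟨α, _, rfl⟩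
      show #_ ≤ Cardinal.lift.{1} 1
      rw [Cardinal.mk_singleton, Cardinal.lift_one]
  refine ⟨fun T hT => hT.1, ?_, ?_, ?_, ?_⟩
  · -- Iio θ.ord ∈ F
    exact ⟨Subset.rfl, _, hsing, fun τ hτ => hτ.1⟩
  · -- ∅ ∉ F
    rintro ⟨_, 𝒜, h𝒜, hsub⟩
    obtain ⟨τ, _, hτ⟩ := tc_exists hκ hχκ hc h𝒜 hθpos
    exact hsub hτ
  · -- upward closure
    rintro S ⟨_, 𝒜, h𝒜, hsub⟩ T hST hT
    exact ⟨hT, 𝒜, h𝒜, hsub.trans hST⟩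
  · -- χ-completeness
    intro I hI hne hIlt
    have hch : ∀ T : ↥I, ∃ 𝒜, AFam κ χ 𝒜 ∧ Tc θ c 𝒜 ⊆ T.1 := fun T => (hI T.2).2
    choose A hA1 hA2 using hch
    have hνch : ∀ T : ↥I, ∃ ν, ν < χ ∧ ∀ a ∈ A T, cardLE a ν := fun T => (hA1 T).2.2.2
    choose νf hνf1 hνf2 using hνch
    haveI hIne : Nonempty ↥I := hne.to_subtype
    have hIlt' : #↥I < Cardinal.lift.{1} χ := hIlt
    obtain ⟨δ, hδ1, hδ2⟩ := small_bdd hχ (s := Set.range fun T : ↥I => (νf T).ord)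
      (by rintro x ⟨T, rfl⟩; exact Cardinal.ord_lt_ord.2 (hνf1 T))
      (lt_of_le_of_lt Cardinal.mk_range_le hIlt')
    have hνχ : δ.card < χ := Cardinal.lt_ord.1 hδ1
    have hνb : ∀ T : ↥I, νf T ≤ δ.card := by
      intro T
      have h := Ordinal.card_le_card (hδ2 _ ⟨T, rfl⟩).le
      rwa [Cardinal.card_ord] at h
    obtain ⟨μ₀, hμ₀⟩ := Cardinal.mem_range_lift_of_le hIlt'.le
    have hμ₀χ : μ₀ < χ := Cardinal.lift_lt.1 (hμ₀ ▸ hIlt')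
    have hν'χ : μ₀ * δ.card < χ := Cardinal.mul_lt_of_lt hχ.aleph0_le hμ₀χ hνχ
    set P : Ordinal → Set Ordinal := fun γ => ⋃ T : ↥I, pickF (A T) γ with hPdef
    have hpick : ∀ γ, γ < κ.ord → ∀ T : ↥I,
        pickF (A T) γ ∈ A T ∧ ∀ x ∈ pickF (A T) γ, γ ≤ x :=
      fun γ hγ T => pickF_spec (exists_high hκ (hA1 T) hγ)
    have hP2 : ∀ γ, γ < κ.ord → #(P γ) ≤ Cardinal.lift.{1} (μ₀ * δ.card) := by
      intro γ hγ
      calc #(P γ) ≤ #↥I * ⨆ T : ↥I, #(pickF (A T) γ) := Cardinal.mk_iUnion_le _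
        _ ≤ Cardinal.lift.{1} μ₀ * Cardinal.lift.{1} δ.card := by
            apply mul_le_mul' (le_of_eq hμ₀.symm)
            apply ciSup_le'
            intro T
            exact le_trans (hνf2 T _ (hpick γ hγ T).1) (Cardinal.lift_le.2 (hνb T))
        _ = Cardinal.lift.{1} (μ₀ * δ.card) := (Cardinal.lift_mul _ _).symm
    have hP : ∀ γ, γ < κ.ord →
        (∀ x ∈ P γ, γ ≤ x ∧ x < κ.ord) ∧ #(P γ) < Cardinal.lift.{1} χ := by
      intro γ hγ
      refine ⟨?_, lt_of_le_of_lt (hP2 γ hγ) (Cardinal.lift_lt.2 hν'χ)⟩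
      intro x hx
      rw [Set.mem_iUnion] at hx
      obtain ⟨T, hxT⟩ := hx
      exact ⟨(hpick γ hγ T).2 x hxT, ((hA1 T).1 _ (hpick γ hγ T).1).1 hxT⟩
    have hblk := blkF_props hκ hχκ hP
    have hsubκ : ∀ α, α < κ.ord → blkF κ P α ⊆ Iio κ.ord := by
      intro α hα x hx
      rw [blkF_eq] at hx
      exact ((hP _ (hblk α hα).1).1 x hx).2
    have hblkne : ∀ α, α < κ.ord → (blkF κ P α).Nonempty := by
      intro α hα
      obtain ⟨T⟩ := hIne
      obtain ⟨x, hx⟩ := ((hA1 T).1 _ (hpick _ (hblk α hα).1 T).1).2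
      refine ⟨x, ?_⟩
      rw [blkF_eq]
      exact Set.mem_iUnion.2 ⟨T, hx⟩
    have hbelow : ∀ α β, α < β → β < κ.ord → setBelow (blkF κ P α) (blkF κ P β) := by
      intro α β hαβ hβ x hx y hy
      have h1 : x < bndF κ P β := (hblk β hβ).2 α hαβ x hx
      have h2 : bndF κ P β ≤ y := by
        rw [blkF_eq] at hy
        exact ((hP _ (hblk β hβ).1).1 y hy).1
      exact h1.trans_le h2
    have hAF : AFam κ χ ((fun α => blkF κ P α) '' Iio κ.ord) := by
      refine ⟨?_, ?_, ?_, μ₀ * δ.card, hν'χ, ?_⟩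
      · rintro a ⟨α, hα, rfl⟩
        exact ⟨hsubκ α hα, hblkne α hα⟩
      · rintro a ⟨α, hα, rfl⟩ b ⟨β, hβ, rfl⟩ hne'
        have hne'' : α ≠ β := fun h => hne' (h ▸ rfl)
        simp only [id_eq]
        rcases lt_or_gt_of_ne hne'' with h | h
        · exact Set.disjoint_left.2 fun x hxa hxb => lt_irrefl x (hbelow α β h hβ x hxa x hxb)
        · exact Set.disjoint_left.2 fun x hxa hxb => lt_irrefl x (hbelow β α h hα x hxb x hxa)
      · show #_ = Cardinal.lift.{1} κ
        have hinjOn : Set.InjOn (fun α => blkF κ P α) (Iio κ.ord) := by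
          intro α hα β hβ hEq
          have hEq' : blkF κ P α = blkF κ P β := hEq
          by_contra hne'
          rcases lt_or_gt_of_ne hne' with h | h
          · obtain ⟨x, hx⟩ := hblkne α hα
            have hx2 : x ∈ blkF κ P β := by rw [← hEq']; exact hx
            exact lt_irrefl x (hbelow α β h hβ x hx x hx2)
          · obtain ⟨x, hx⟩ := hblkne β hβ
            have hx2 : x ∈ blkF κ P α := by rw [hEq']; exact hx
            exact lt_irrefl x (hbelow β α h hα x hx x hx2)
        rw [Cardinal.mk_image_eq_of_injOn _ _ hinjOn, Ordinal.mk_Iio_ordinal,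
          Cardinal.card_ord]
      · rintro a ⟨α, hα, rfl⟩
        show #(blkF κ P α) ≤ Cardinal.lift.{1} (μ₀ * δ.card)
        rw [blkF_eq]
        exact hP2 _ (hblk α hα).1
    refine ⟨?_, _, hAF, ?_⟩
    · obtain ⟨T₀, hT₀⟩ := hne
      intro x hx
      exact (hI hT₀).1 (hx _ hT₀)
    · rintro τ ⟨hτθ, a, ha, b, hb, hab, hconst⟩
      obtain ⟨α, hα, rfl⟩ := ha
      obtain ⟨β, hβ, rfl⟩ := hb
      intro T hT
      apply hA2 ⟨T, hT⟩
      have hsa : pickF (A ⟨T, hT⟩) (bndF κ P α) ⊆ blkF κ P α := by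
        rw [blkF_eq]
        exact Set.subset_iUnion (fun T' : ↥I => pickF (A T') (bndF κ P α)) ⟨T, hT⟩
      have hsb : pickF (A ⟨T, hT⟩) (bndF κ P β) ⊆ blkF κ P β := by
        rw [blkF_eq]
        exact Set.subset_iUnion (fun T' : ↥I => pickF (A T') (bndF κ P β)) ⟨T, hT⟩
      have hpa := hpick _ (hblk α hα).1 (⟨T, hT⟩ : ↥I)
      have hpb := hpick _ (hblk β hβ).1 (⟨T, hT⟩ : ↥I)
      refine ⟨hτθ, _, hpa.1, _, hpb.1, fun x hx y hy => hab x (hsa hx) y (hsb hy), ?_⟩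
      have hsub2 : Set.image2 c (pickF (A ⟨T, hT⟩) (bndF κ P α))
          (pickF (A ⟨T, hT⟩) (bndF κ P β)) ⊆ {τ} := by
        rw [← hconst]
        exact Set.image2_subset hsa hsb
      have hne2 : (Set.image2 c (pickF (A ⟨T, hT⟩) (bndF κ P α))
          (pickF (A ⟨T, hT⟩) (bndF κ P β))).Nonempty :=
        Set.Nonempty.image2 ((hA1 ⟨T, hT⟩).1 _ hpa.1).2 ((hA1 ⟨T, hT⟩).1 _ hpb.1).2
      obtain ⟨z, hz⟩ := hne2
      have hzτ : z = τ := hsub2 hz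
      exact subset_antisymm hsub2 (singleton_subset_iff.2 (hzτ ▸ hz))
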